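/- arXiv:2503.18577 — 3 statements merged into one kernel-verified Lean document; each statement's English description precedes it below -/
import Mathlib

section
/- Let K ⊆ ℝ² be a convex set containing two points x, y with |x−y| = diam(K) =: l₁, and let l₂ be the diameter of the orthogonal projection of K onto a line perpendicular to x−y. Then K contains a rectangle (an isometric copy of [0, l₁/4] × [0, l₂/4]). -/
open Metric Set Submodule RealInnerProductSpace

private theorem exists_dist_eq_diam' {α : Type*} [MetricSpace α] (s : Set α)
    (hs : IsCompact s) (hne : s.Nonempty) :
    ∃ u ∈ s, ∃ v ∈ s, dist u v = Metric.diam s := by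
  have hc : IsCompact (s ×ˢ s) := hs.prod hs
  obtain ⟨p, hp, hmax⟩ := hc.exists_isMaxOn (hne.prod hne) continuous_dist.continuousOn
  refine ⟨p.1, hp.1, p.2, hp.2, le_antisymm (dist_le_diam_of_mem hs.isBounded hp.1 hp.2) ?_⟩
  refine Metric.diam_le_of_forall_dist_le dist_nonneg ?_
  intro a ha b hb
  exact hmax (Set.mk_mem_prod ha hb)

private theorem orthonormal_pair {e₀ e₁ : EuclideanSpace ℝ (Fin 2)}
    (h0 : ‖e₀‖ = 1) (h1 : ‖e₁‖ = 1) (h01 : ⟪e₀, e₁⟫ = 0) :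
    Orthonormal ℝ ![e₀, e₁] := by
  rw [orthonormal_iff_ite]
  intro i j
  fin_cases i <;> fin_cases j <;>
    simp only [Matrix.cons_val_zero, Matrix.cons_val_one, Matrix.head_cons, Fin.mk_zero,
      Fin.mk_one, if_true, eq_self_iff_true, Fin.zero_eq_one_iff, Fin.one_eq_zero_iff,
      Nat.succ_ne_self, if_false, ite_true, ite_false, ne_eq, OfNat.ofNat_ne_one, one_ne_zero]
  · rw [real_inner_self_eq_norm_mul_norm, h0]; norm_num
  · exact h01
  · rw [real_inner_comm]; exact h01
  · rw [real_inner_self_eq_norm_mul_norm, h1]; norm_num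

private noncomputable def onbasis {e₀ e₁ : EuclideanSpace ℝ (Fin 2)}
    (hon : Orthonormal ℝ ![e₀, e₁]) : OrthonormalBasis (Fin 2) ℝ (EuclideanSpace ℝ (Fin 2)) :=
  OrthonormalBasis.mk hon
    (by rw [hon.linearIndependent.span_eq_top_of_card_eq_finrank
          (by simp [finrank_euclideanSpace_fin])])

private theorem onbasis_decomp {e₀ e₁ : EuclideanSpace ℝ (Fin 2)}
    (hon : Orthonormal ℝ ![e₀, e₁]) (z : EuclideanSpace ℝ (Fin 2)) :
    z = ⟪e₀, z⟫ • e₀ + ⟪e₁, z⟫ • e₁ := by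
  have hb0 : (onbasis hon) 0 = e₀ := by simp [onbasis]
  have hb1 : (onbasis hon) 1 = e₁ := by simp [onbasis]
  conv_lhs => rw [← (onbasis hon).sum_repr z]
  rw [Fin.sum_univ_two, (onbasis hon).repr_apply_apply, (onbasis hon).repr_apply_apply, hb0, hb1]

/-- Main geometric lemma: if `K` is convex, contains `x`, `y = x + l₁ • e₀`, and a point `p`
whose `e₁`-height above `x` is at least `l₂ / 2`, with `p` at distance at most `l₁` from both
`x` and `y`, then `K` contains an isometric copy of `[0, l₁/4] × [0, l₂/4]`. -/
private theorem aux (K : Set (EuclideanSpace ℝ (Fin 2))) (hconv : Convex ℝ K)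
    (x p : EuclideanSpace ℝ (Fin 2)) (hx : x ∈ K) (hp : p ∈ K)
    (e₀ e₁ : EuclideanSpace ℝ (Fin 2))
    (h0 : ‖e₀‖ = 1) (h1 : ‖e₁‖ = 1) (h01 : ⟪e₀, e₁⟫ = 0)
    (l₁ l₂ : ℝ) (hl₁ : 0 < l₁) (hl₂ : 0 ≤ l₂)
    (hy : x + l₁ • e₀ ∈ K)
    (hdx : ‖p - x‖ ≤ l₁) (hdy : ‖p - (x + l₁ • e₀)‖ ≤ l₁)
    (hh : l₂ / 2 ≤ ⟪e₁, p - x⟫) :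
    ∃ f : EuclideanSpace ℝ (Fin 2) ≃ᵢ EuclideanSpace ℝ (Fin 2),
      f '' {q | q 0 ∈ Set.Icc 0 (l₁ / 4) ∧ q 1 ∈ Set.Icc 0 (l₂ / 4)} ⊆ K := by
  have hon : Orthonormal ℝ ![e₀, e₁] := orthonormal_pair h0 h1 h01
  obtain ⟨a, ha⟩ : ∃ r : ℝ, r = ⟪e₀, p - x⟫ := ⟨_, rfl⟩
  obtain ⟨h, hhdef⟩ : ∃ r : ℝ, r = ⟪e₁, p - x⟫ := ⟨_, rfl⟩
  have hh' : l₂ / 2 ≤ h := by rw [hhdef]; exact hh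
  have hd := onbasis_decomp hon (p - x)
  rw [← ha, ← hhdef] at hd
  have hp' : p = x + (a • e₀ + h • e₁) := by rw [← hd]; abel
  have hh0 : 0 ≤ h := le_trans (by linarith) hh'
  have haub : a ≤ l₁ := by
    have h2 := real_inner_le_norm e₀ (p - x)
    rw [h0, one_mul] at h2
    rw [ha]
    exact le_trans h2 hdx
  have halb : 0 ≤ a := by
    have h2 := real_inner_le_norm e₀ (x + l₁ • e₀ - p)
    have hinner : ⟪e₀, x + l₁ • e₀ - p⟫ = l₁ - a := by
      have he : x + l₁ • e₀ - p = l₁ • e₀ - (p - x) := by abel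
      rw [he, inner_sub_right, real_inner_smul_right, real_inner_self_eq_norm_mul_norm, h0,
        ← ha]
      ring
    rw [hinner, h0, one_mul, norm_sub_rev] at h2
    have := le_trans h2 hdy
    linarith
  -- the convex-combination membership claim
  have key : ∀ s t : ℝ, 0 ≤ s → s ≤ l₁ / 4 → 0 ≤ t → t ≤ l₂ / 4 →
      x + ((a / 2 + s) • e₀ + (h / 2 - l₂ / 4 + t) • e₁) ∈ K := by
    intro s t hs0 hs1 ht0 ht1
    obtain ⟨u, hu⟩ : ∃ r : ℝ, r = h / 2 - l₂ / 4 + t := ⟨_, rfl⟩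
    obtain ⟨μ3, hμ3⟩ : ∃ r : ℝ, r = u / h := ⟨_, rfl⟩
    obtain ⟨μ2, hμ2⟩ : ∃ r : ℝ, r = (a / 2 + s - a * μ3) / l₁ := ⟨_, rfl⟩
    have hu0 : 0 ≤ u := by rw [hu]; linarith
    have huh : u ≤ h / 2 := by rw [hu]; linarith
    have hμ30 : 0 ≤ μ3 := by rw [hμ3]; exact div_nonneg hu0 hh0
    have hμ3half : μ3 ≤ 1 / 2 := by
      rcases eq_or_lt_of_le hh0 with heq | hlt
      · have hu0' : u = 0 := le_antisymm (by linarith [huh, heq.symm ▸ huh]) hu0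
        rw [hμ3, hu0']; simp
      · rw [hμ3, div_le_iff₀ hlt]; linarith
    have hμ3h : μ3 * h = u := by
      rcases eq_or_lt_of_le hh0 with heq | hlt
      · have hu0' : u = 0 := by
          have : u ≤ 0 := by rw [← heq] at huh; linarith
          linarith
        rw [hu0', ← heq, mul_zero]
      · rw [hμ3]; field_simp
    have hμ20 : 0 ≤ μ2 := by
      rw [hμ2]
      apply div_nonneg _ hl₁.le
      nlinarith [mul_nonneg halb (by linarith : (0:ℝ) ≤ 1 / 2 - μ3)]
    have hμ2l : μ2 * l₁ = a / 2 + s - a * μ3 := by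
      rw [hμ2, div_mul_cancel₀ _ hl₁.ne']
    have hμ121 : μ2 + μ3 ≤ 1 := by
      rw [← mul_le_mul_iff_left₀ hl₁, add_mul, hμ2l, one_mul]
      nlinarith [mul_nonneg (sub_nonneg.2 haub) (by linarith : (0:ℝ) ≤ 1 / 2 - μ3)]
    have hmem := hconv.sum_mem (t := Finset.univ)
      (w := ![1 - μ2 - μ3, μ2, μ3]) (z := ![x, x + l₁ • e₀, p])
      (by intro i _; fin_cases i <;> simp <;> linarith)
      (by rw [Fin.sum_univ_three]; simp; ring)
      (by intro i _; fin_cases i <;> simpa using (by assumption : _))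
    have hsum3 : (∑ i, ![1 - μ2 - μ3, μ2, μ3] i • ![x, x + l₁ • e₀, p] i)
        = (1 - μ2 - μ3) • x + μ2 • (x + l₁ • e₀) + μ3 • p := by
      rw [Fin.sum_univ_three]; simp
    rw [hsum3] at hmem
    have hpt : (1 - μ2 - μ3) • x + μ2 • (x + l₁ • e₀) + μ3 • p
        = x + ((a / 2 + s) • e₀ + u • e₁) := by
      rw [hp', show a / 2 + s = μ2 * l₁ + μ3 * a by rw [hμ2l]; ring,
        show u = μ3 * h from hμ3h.symm]
      module
    rw [hpt] at hmem
    rw [← hu]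
    exact hmem
  -- the isometry
  obtain ⟨c, hc⟩ : ∃ c : EuclideanSpace ℝ (Fin 2),
      c = x + ((a / 2) • e₀ + (h / 2 - l₂ / 4) • e₁) := ⟨_, rfl⟩
  set b := onbasis hon with hb
  have hb0 : b 0 = e₀ := by simp [hb, onbasis]
  have hb1 : b 1 = e₁ := by simp [hb, onbasis]
  refine ⟨b.repr.symm.toIsometryEquiv.trans (IsometryEquiv.addLeft c), ?_⟩
  rintro w ⟨q, ⟨hq0, hq1⟩, rfl⟩
  have hfq : (b.repr.symm.toIsometryEquiv.trans (IsometryEquiv.addLeft c)) q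
      = x + ((a / 2 + q 0) • e₀ + (h / 2 - l₂ / 4 + q 1) • e₁) := by
    have hsym : b.repr.symm q = q 0 • e₀ + q 1 • e₁ := by
      rw [← b.sum_repr_symm, Fin.sum_univ_two, hb0, hb1]
    show c + b.repr.symm q = _
    rw [hsym, hc]
    module
  rw [hfq]
  exact key (q 0) (q 1) hq0.1 hq0.2 hq1.1 hq1.2

/-- A planar compact convex body `K` with points `x, y` realizing its
diameter `l₁`, and second diameter `l₂` (the diameter of the orthogonal projection
of `K` onto the line perpendicular to `x - y`), contains an isometric copy of the
rectangle `[0, l₁/4] × [0, l₂/4]`. -/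
theorem stmt_0 (K : Set (EuclideanSpace ℝ (Fin 2)))
    (hKcomp : IsCompact K) (hKconv : Convex ℝ K) (hKint : (interior K).Nonempty)
    (x y : EuclideanSpace ℝ (Fin 2)) (hx : x ∈ K) (hy : y ∈ K)
    (hdiam : dist x y = Metric.diam K)
    (l₁ l₂ : ℝ) (hl₁ : l₁ = Metric.diam K)
    (hl₂ : l₂ = Metric.diam
      ((Submodule.orthogonalProjectionOnto ((ℝ ∙ (x - y))ᗮ)) '' K)) :
    ∃ f : EuclideanSpace ℝ (Fin 2) ≃ᵢ EuclideanSpace ℝ (Fin 2),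
      f '' {p | p 0 ∈ Set.Icc 0 (l₁ / 4) ∧ p 1 ∈ Set.Icc 0 (l₂ / 4)} ⊆ K := by
  have hKb := hKcomp.isBounded
  have hl₂0 : 0 ≤ l₂ := hl₂ ▸ Metric.diam_nonneg
  -- l₁ > 0
  have hl1pos : 0 < l₁ := by
    obtain ⟨z, hz⟩ := hKint
    obtain ⟨r, hr, hball⟩ := Metric.isOpen_iff.1 isOpen_interior z hz
    have hz1 : z ∈ K := interior_subset hz
    have hz2 : z + (r / 2) • EuclideanSpace.single (0 : Fin 2) (1 : ℝ) ∈ K := by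
      apply interior_subset; apply hball
      rw [Metric.mem_ball, dist_eq_norm, add_sub_cancel_left, norm_smul,
        EuclideanSpace.norm_single]
      simp only [norm_one, mul_one, Real.norm_eq_abs, abs_of_pos (by linarith : (0:ℝ) < r / 2)]
      linarith
    have hd2 := dist_le_diam_of_mem hKb hz2 hz1
    rw [dist_eq_norm, add_sub_cancel_left, norm_smul, EuclideanSpace.norm_single] at hd2
    simp only [norm_one, mul_one, Real.norm_eq_abs,
      abs_of_pos (by linarith : (0:ℝ) < r / 2)] at hd2
    rw [hl₁]; linarith
  have hdxy : dist x y = l₁ := by rw [hdiam, hl₁]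
  have hxyne : x - y ≠ 0 := by
    rw [sub_ne_zero]
    intro hxy
    rw [hxy, dist_self] at hdxy
    linarith
  -- e₀ and its properties
  obtain ⟨e₀, he₀⟩ : ∃ e : EuclideanSpace ℝ (Fin 2), e = l₁⁻¹ • (y - x) := ⟨_, rfl⟩
  have hyx : ‖y - x‖ = l₁ := by rw [← dist_eq_norm, dist_comm, hdxy]
  have h0 : ‖e₀‖ = 1 := by
    rw [he₀, norm_smul, hyx, Real.norm_eq_abs, abs_of_pos (inv_pos.2 hl1pos),
      inv_mul_cancel₀ hl1pos.ne']
  have he₀mem : e₀ ∈ ℝ ∙ (x - y) := by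
    rw [Submodule.mem_span_singleton]
    exact ⟨-l₁⁻¹, by rw [he₀]; module⟩
  have hyeq : x + l₁ • e₀ = y := by
    rw [he₀, smul_smul, mul_inv_cancel₀ hl1pos.ne', one_smul, add_sub_cancel]
  -- the orthogonal complement and a unit vector in it
  set W := (ℝ ∙ (x - y))ᗮ with hW
  have hrank : Module.finrank ℝ W = 1 := by
    have h1 := (ℝ ∙ (x - y)).finrank_add_finrank_orthogonal
    rw [finrank_span_singleton hxyne, finrank_euclideanSpace_fin] at h1
    linarith
  obtain ⟨v, hvW, hvne⟩ : ∃ v ∈ W, v ≠ 0 := by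
    apply Submodule.exists_mem_ne_zero_of_ne_bot
    intro hbot
    rw [hbot] at hrank
    simp at hrank
  obtain ⟨e₁, he₁⟩ : ∃ e : EuclideanSpace ℝ (Fin 2), e = ‖v‖⁻¹ • v := ⟨_, rfl⟩
  have hvpos : 0 < ‖v‖ := norm_pos_iff.2 hvne
  have h1 : ‖e₁‖ = 1 := by
    rw [he₁, norm_smul, Real.norm_eq_abs, abs_of_pos (inv_pos.2 hvpos),
      inv_mul_cancel₀ hvpos.ne']
  have he₁W : e₁ ∈ W := he₁ ▸ Submodule.smul_mem W _ hvW
  have h01 : ⟪e₀, e₁⟫ = 0 := Submodule.inner_right_of_mem_orthogonal he₀mem he₁W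
  have hon : Orthonormal ℝ ![e₀, e₁] := orthonormal_pair h0 h1 h01
  -- orthogonal projection formula
  have hproj : ∀ z : EuclideanSpace ℝ (Fin 2),
      ((orthogonalProjection W z : W) : EuclideanSpace ℝ (Fin 2)) = ⟪e₁, z⟫ • e₁ := by
    intro z
    rw [show ((orthogonalProjection W z : W) : EuclideanSpace ℝ (Fin 2)) = W.starProjection z from rfl,
      eq_starProjection_of_mem_orthogonal (Submodule.smul_mem W _ he₁W) ?_]
    have hz := onbasis_decomp hon z
    have hsub : z - ⟪e₁, z⟫ • e₁ = ⟪e₀, z⟫ • e₀ := by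
      nth_rewrite 1 [hz]
      abel
    rw [hW, Submodule.orthogonal_orthogonal, hsub]
    exact Submodule.smul_mem _ _ he₀mem
  -- the helper applying aux
  have main : ∀ e : EuclideanSpace ℝ (Fin 2), ‖e‖ = 1 → ⟪e₀, e⟫ = 0 →
      ∀ p ∈ K, l₂ / 2 ≤ ⟪e, p - x⟫ →
      ∃ f : EuclideanSpace ℝ (Fin 2) ≃ᵢ EuclideanSpace ℝ (Fin 2),
        f '' {q | q 0 ∈ Set.Icc 0 (l₁ / 4) ∧ q 1 ∈ Set.Icc 0 (l₂ / 4)} ⊆ K := by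
    intro e hne hoe p hpK hpe
    refine aux K hKconv x p hx hpK e₀ e h0 hne hoe l₁ l₂ hl1pos hl₂0 ?_ ?_ ?_ hpe
    · rw [hyeq]; exact hy
    · rw [← dist_eq_norm, hl₁]
      exact dist_le_diam_of_mem hKb hpK hx
    · rw [hyeq, ← dist_eq_norm, hl₁]
      exact dist_le_diam_of_mem hKb hpK hy
  -- attain the diameter of the projection
  have hKne : K.Nonempty := ⟨x, hx⟩
  have hcomp : IsCompact ((orthogonalProjection W) '' K) :=
    hKcomp.image (orthogonalProjection W).continuous
  obtain ⟨pu, hpu, pv, hpv, hduv⟩ :=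
    exists_dist_eq_diam' _ hcomp (hKne.image _)
  obtain ⟨u', hu'K, rfl⟩ := hpu
  obtain ⟨v', hv'K, rfl⟩ := hpv
  have hduvl : dist ((orthogonalProjection W) u') ((orthogonalProjection W) v') = l₂ := by
    rw [hl₂]; exact hduv
  have hdist : |⟪e₁, u'⟫ - ⟪e₁, v'⟫| = l₂ := by
    rw [← hduvl, Subtype.dist_eq, dist_eq_norm]
    have hc : ((orthogonalProjection W u' - orthogonalProjection W v' : W) :
        EuclideanSpace ℝ (Fin 2)) = ⟪e₁, u'⟫ • e₁ - ⟪e₁, v'⟫ • e₁ := by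
      rw [Submodule.coe_sub, hproj, hproj]
    rw [← Submodule.coe_sub, hc, ← sub_smul, norm_smul, h1, mul_one, Real.norm_eq_abs]
  obtain ⟨α, hα⟩ : ∃ r : ℝ, r = ⟪e₁, u' - x⟫ := ⟨_, rfl⟩
  obtain ⟨β, hβ⟩ : ∃ r : ℝ, r = ⟪e₁, v' - x⟫ := ⟨_, rfl⟩
  have hαβ : α - β = ⟪e₁, u'⟫ - ⟪e₁, v'⟫ := by
    rw [hα, hβ, inner_sub_right, inner_sub_right]; ring
  have hne1 : ‖-e₁‖ = 1 := by rw [norm_neg]; exact h1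
  have hoe1 : ⟪e₀, -e₁⟫ = 0 := by rw [inner_neg_right, h01, neg_zero]
  rw [← hαβ] at hdist
  rcases (abs_eq hl₂0).1 hdist with hcase | hcase
  · by_cases hbig : l₂ / 2 ≤ α
    · exact main e₁ h1 h01 u' hu'K (hα ▸ hbig)
    · refine main (-e₁) hne1 hoe1 v' hv'K ?_
      rw [show ⟪-e₁, v' - x⟫ = -β by rw [hβ, inner_neg_left]]
      linarith
  · by_cases hbig : l₂ / 2 ≤ β
    · exact main e₁ h1 h01 v' hv'K (hβ ▸ hbig)
    · refine main (-e₁) hne1 hoe1 u' hu'K ?_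
      rw [show ⟪-e₁, u' - x⟫ = -α by rw [hα, inner_neg_left]]
      linarith
end

section
/- Let d ≥ 2 and let K ⊆ ℝ^d be a convex polytope with 2d vertices whose diameters (defined iteratively via orthogonal projections) are 0 < l_d ≤ … ≤ l₁ < ∞. Then K contains a box congruent to the product of the intervals [0, 2^{−2(d−1)} l_i] for i = 1, …, d. -/
set_option maxHeartbeats 1000000

open Metric Set

/-- Width of the guaranteed box in coordinate `j`. -/
noncomputable def boxW (d : ℕ) (l : Fin d → ℝ) (j : Fin d) : ℝ :=
  if (j : ℕ) = d - 1 then l j * (4:ℝ)⁻¹ ^ (d-1) else l j / 2 * (4:ℝ)⁻¹ ^ (j : ℕ)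

lemma core (d : ℕ) (hd : 1 ≤ d) (L : Set (EuclideanSpace ℝ (Fin d))) (hL : Convex ℝ L)
    (l : Fin d → ℝ) (hlpos : ∀ i, 0 < l i)
    (H : ∀ i : Fin d, ∃ a ∈ L, ∃ b ∈ L,
      (∀ j : Fin d, i ≤ j → a j - b j = if j = i then l i else 0) ∧
      (∀ x ∈ L, b i ≤ x i ∧ x i ≤ a i)) :
    ∃ c : Fin d → ℝ, ∀ t : EuclideanSpace ℝ (Fin d),
      (∀ j : Fin d, t j ∈ Set.Icc (c j) (c j + boxW d l j)) → t ∈ L := by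
  have main : ∀ n k : ℕ, k + n + 1 = d → ∃ c : Fin d → ℝ,
      ∀ t : EuclideanSpace ℝ (Fin d),
        (∀ j : Fin d, k ≤ (j : ℕ) → t j ∈ Set.Icc (c j) (c j + (4:ℝ)^k * boxW d l j)) →
        ∃ x ∈ L, ∀ j : Fin d, k ≤ (j : ℕ) → x j = t j := by
    intro n
    induction n with
    | zero =>
      intro k hk
      -- k = d - 1 : base case, use the full last diameter
      have hlt : k < d := by omega
      have hkd : k = d - 1 := by omega
      set i : Fin d := ⟨k, hlt⟩ with hidef
      obtain ⟨a, ha, b, hb, hab, hbox⟩ := H i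
      refine ⟨fun j => b j, ?_⟩
      intro t ht
      have habi : a i - b i = l i := by simpa using hab i le_rfl
      have h4 : (4:ℝ)^k * ((4:ℝ)⁻¹)^(d-1) = 1 := by
        rw [hkd, ← mul_pow]; norm_num
      have hwi : (4:ℝ)^k * boxW d l i = l i := by
        have hbv : boxW d l i = l i * (4:ℝ)⁻¹ ^ (d-1) := by
          simp only [boxW, hidef, Fin.val_mk] ; rw [if_pos hkd]
        rw [hbv]
        calc (4:ℝ)^k * (l i * (4:ℝ)⁻¹ ^ (d-1))
            = l i * ((4:ℝ)^k * ((4:ℝ)⁻¹)^(d-1)) := by ring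
          _ = l i := by rw [h4, mul_one]
      obtain ⟨hti1, hti2⟩ := ht i (by simp [hidef])
      rw [hwi] at hti2
      simp only at hti1 hti2
      have hθl : (t i - b i) / l i * l i = t i - b i :=
        div_mul_cancel₀ _ (hlpos i).ne'
      set θ : ℝ := (t i - b i) / l i with hθdef
      have hθ0 : 0 ≤ θ := div_nonneg (by linarith) (hlpos i).le
      have hθ1 : θ ≤ 1 := by rw [hθdef, div_le_one (hlpos i)]; linarith
      refine ⟨θ • a + (1 - θ) • b, hL ha hb hθ0 (by linarith) (by ring), ?_⟩
      intro j hj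
      have hji : j = i := by
        apply Fin.ext
        have := j.isLt
        simp only [hidef, Fin.val_mk]
        omega
      rw [hji]
      have hθab : θ * (a i - b i) = t i - b i := by rw [habi]; exact hθl
      simp only [PiLp.add_apply, PiLp.smul_apply, smul_eq_mul]
      linarith [hθab]
    | succ n ih =>
      intro k hk
      obtain ⟨c, hc⟩ := ih (k+1) (by omega)
      have hltk : k < d := by omega
      set i : Fin d := ⟨k, hltk⟩ with hidef
      obtain ⟨a, ha, b, hb, hab, hbox⟩ := H i
      have habi : a i - b i = l i := by simpa using hab i le_rfl
      set m : ℝ := (a i + b i) / 2 with hmdef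
      have hlk : 0 < l i := hlpos i
      refine ⟨fun j => if (j : ℕ) = k then m - l i / 4 else (c j + 3 * a j) / 4, ?_⟩
      intro t ht
      set tt : EuclideanSpace ℝ (Fin d) := (4:ℝ) • t - (3:ℝ) • a with httdef
      have httj : ∀ j : Fin d, tt j = 4 * t j - 3 * a j := by
        intro j; simp [httdef]
      have htt : ∀ j : Fin d, k + 1 ≤ (j:ℕ) →
          tt j ∈ Set.Icc (c j) (c j + (4:ℝ)^(k+1) * boxW d l j) := by
        intro j hj
        have hne : (j : ℕ) ≠ k := by omega
        obtain ⟨h1, h2⟩ := ht j (by omega)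
        simp only [hne, if_false] at h1 h2
        rw [httj j]
        rw [pow_succ]
        constructor
        · linarith
        · linarith
      obtain ⟨xt, hxt, hxtc⟩ := hc tt htt
      obtain ⟨hxb1, hxb2⟩ := hbox xt hxt
      have hlaml : (xt i - b i) / l i * l i = xt i - b i := div_mul_cancel₀ _ hlk.ne'
      set lam : ℝ := (xt i - b i) / l i with hlamdef
      have hlam0 : 0 ≤ lam := div_nonneg (by linarith) hlk.le
      have hlam1 : lam ≤ 1 := by rw [hlamdef, div_le_one hlk]; linarith
      set v : EuclideanSpace ℝ (Fin d) := lam • b + (1 - lam) • a with hvdef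
      have hv : v ∈ L := hL hb ha hlam0 (by linarith) (by ring)
      set u : EuclideanSpace ℝ (Fin d) := (2:ℝ)⁻¹ • xt + (2:ℝ)⁻¹ • v with hudef
      have hu : u ∈ L := hL hxt hv (by norm_num) (by norm_num) (by norm_num)
      obtain ⟨hti1, hti2⟩ := ht i (by simp [hidef])
      have hii : ((i:ℕ) = k) := rfl
      simp only [hii, if_true] at hti1 hti2
      have hwik : (4:ℝ)^k * boxW d l i = l i / 2 := by
        have hne : (i : ℕ) ≠ d - 1 := by
          simp only [hidef, Fin.val_mk]; omega
        have hbv : boxW d l i = l i / 2 * (4:ℝ)⁻¹ ^ (i:ℕ) := by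
          simp only [boxW]; rw [if_neg hne]
        have hik : ((i:ℕ)) = k := rfl
        rw [hbv, hik]
        have h4 : (4:ℝ)^k * ((4:ℝ)⁻¹)^k = 1 := by rw [← mul_pow]; norm_num
        calc (4:ℝ)^k * (l i / 2 * (4:ℝ)⁻¹ ^ k)
            = l i / 2 * ((4:ℝ)^k * ((4:ℝ)⁻¹)^k) := by ring
          _ = l i / 2 := by rw [h4, mul_one]
      rw [hwik] at hti2
      have hθl : (t i - (m - l i / 4)) / (l i / 2) * (l i / 2) = t i - (m - l i / 4) :=
        div_mul_cancel₀ _ (by positivity)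
      set θ : ℝ := (t i - (m - l i / 4)) / (l i / 2) with hθdef
      have hθ0 : 0 ≤ θ := div_nonneg (by linarith) (by linarith)
      have hθ1 : θ ≤ 1 := by rw [hθdef, div_le_one (by linarith)]; linarith
      set wpt : EuclideanSpace ℝ (Fin d) := θ • a + (1 - θ) • b with hwdef
      have hw : wpt ∈ L := hL ha hb hθ0 (by linarith) (by ring)
      refine ⟨(2:ℝ)⁻¹ • u + (2:ℝ)⁻¹ • wpt,
        hL hu hw (by norm_num) (by norm_num) (by norm_num), ?_⟩
      intro j hj
      have hxj : ((2:ℝ)⁻¹ • u + (2:ℝ)⁻¹ • wpt) j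
          = (((xt j) + (lam * b j + (1 - lam) * a j))/2 + (θ * a j + (1 - θ) * b j))/2 := by
        simp only [hudef, hvdef, hwdef, PiLp.add_apply, PiLp.smul_apply, smul_eq_mul]
        ring
      rw [hxj]
      clear hxj hw hu hv hc ht htt H hbox hL hxt
      clear_value tt u v wpt θ lam m i
      rcases Nat.eq_or_lt_of_le hj with hjk | hjk
      · -- j = i
        have hji : j = i := by
          apply Fin.ext; simp only [hidef, Fin.val_mk]; omega
        rw [hji]
        have h1 : lam * (a i - b i) = xt i - b i := by rw [habi]; exact hlaml
        have h2 : θ * (a i - b i) = 2 * (t i - (m - l i / 4)) := by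
          rw [habi]
          have := hθl
          nlinarith [hθl]
        have hm : m = (a i + b i) / 2 := hmdef
        linarith [h1, h2]
      · -- j > k
        have hj1 : k + 1 ≤ (j:ℕ) := hjk
        have hjne : j ≠ i := by
          intro h
          rw [h] at hj1
          simp only [hidef, Fin.val_mk] at hj1
          omega
        have habj : a j - b j = 0 := by
          have hle : i ≤ j := by
            rw [Fin.le_def]; simp only [hidef, Fin.val_mk]; omega
          simpa [hjne] using hab j hle
        have hxtj : xt j = 4 * t j - 3 * a j := by
          rw [hxtc j hj1, httj j]
        rw [hxtj]
        have h1 : lam * (a j - b j) = 0 := by rw [habj, mul_zero]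
        have h2 : θ * (a j - b j) = 0 := by rw [habj, mul_zero]
        linarith [h1, h2, habj]
  obtain ⟨c, hc⟩ := main (d - 1) 0 (by omega)
  refine ⟨c, fun t ht => ?_⟩
  obtain ⟨x, hx, hxc⟩ := hc t (by
    intro j _
    simpa using ht j)
  have hxeq : x = t := (WithLp.equiv 2 _).injective <| funext fun j => hxc j (Nat.zero_le _)
  rwa [hxeq] at hx

open scoped RealInnerProductSpace

/-- A convex polytope `K ⊆ ℝ^d` (`d ≥ 2`) with `2d` vertices, whose
iteratively defined diameters are `0 < l_d ≤ … ≤ l₁ < ∞` (with orthonormal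
orientations `p i`, the `i`-th diameter being the diameter of the orthogonal
projection of `K` onto the orthogonal complement of the span of the previous
orientations, realized in direction `p i`), contains a box congruent to
`∏_{i=1}^d [0, 2^{-2(d-1)} l_i]`. -/
theorem stmt_1 (d : ℕ) (hd : 2 ≤ d)
    (V : Finset (EuclideanSpace ℝ (Fin d))) (hV : V.card = 2 * d)
    (K : Set (EuclideanSpace ℝ (Fin d))) (hK : K = convexHull ℝ (V : Set (EuclideanSpace ℝ (Fin d))))
    (hKint : (interior K).Nonempty)
    (l : Fin d → ℝ) (p : Fin d → EuclideanSpace ℝ (Fin d))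
    (hlpos : ∀ i, 0 < l i)
    (hlmono : ∀ i j : Fin d, i ≤ j → l j ≤ l i)
    (hpnorm : ∀ i, ‖p i‖ = 1)
    (hpmem : ∀ i : Fin d, p i ∈ (Submodule.span ℝ (p '' {j | j < i}))ᗮ)
    (hldiam : ∀ i : Fin d, l i = Metric.diam
      ((Submodule.orthogonalProjectionOnto ((Submodule.span ℝ (p '' {j | j < i}))ᗮ)) '' K))
    (hreal : ∀ i : Fin d, ∃ a ∈ K, ∃ b ∈ K,
      ((Submodule.span ℝ (p '' {j | j < i}))ᗮ).subtype
          ((Submodule.orthogonalProjectionOnto ((Submodule.span ℝ (p '' {j | j < i}))ᗮ)) a)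
        - ((Submodule.span ℝ (p '' {j | j < i}))ᗮ).subtype
          ((Submodule.orthogonalProjectionOnto ((Submodule.span ℝ (p '' {j | j < i}))ᗮ)) b)
        = l i • p i) :
    ∃ f : EuclideanSpace ℝ (Fin d) ≃ᵢ EuclideanSpace ℝ (Fin d),
      f '' {q | ∀ i : Fin d, q i ∈ Set.Icc 0 (((2:ℝ) ^ (2 * (d - 1)))⁻¹ * l i)} ⊆ K := by
  classical
  have hd1 : 1 ≤ d := by omega
  haveI : Nonempty (Fin d) := ⟨⟨0, by omega⟩⟩
  -- p is orthonormal
  have horth : Orthonormal ℝ p := by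
    rw [orthonormal_iff_ite]
    intro i j
    rcases lt_trichotomy i j with h | h | h
    · rw [if_neg (ne_of_lt h)]
      have hmem : p i ∈ Submodule.span ℝ (p '' {k | k < j}) :=
        Submodule.subset_span ⟨i, h, rfl⟩
      exact (Submodule.mem_orthogonal _ _).mp (hpmem j) _ hmem
    · rw [if_pos h, h, real_inner_self_eq_norm_sq, hpnorm j, one_pow]
    · rw [if_neg (ne_of_gt h), real_inner_comm]
      have hmem : p j ∈ Submodule.span ℝ (p '' {k | k < i}) :=
        Submodule.subset_span ⟨j, h, rfl⟩
      exact (Submodule.mem_orthogonal _ _).mp (hpmem i) _ hmem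
  -- orthonormal basis from p
  have hli : LinearIndependent ℝ p := horth.linearIndependent
  have hcard : Fintype.card (Fin d) = Module.finrank ℝ (EuclideanSpace ℝ (Fin d)) := by
    simp
  let b0 := basisOfLinearIndependentOfCardEqFinrank hli hcard
  have hb0 : ⇑b0 = p := coe_basisOfLinearIndependentOfCardEqFinrank hli hcard
  let B : OrthonormalBasis (Fin d) ℝ (EuclideanSpace ℝ (Fin d)) :=
    b0.toOrthonormalBasis (by rwa [hb0])
  have hB : ⇑B = p := by
    rw [show ⇑B = ⇑b0 from b0.coe_toOrthonormalBasis _, hb0]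
  let φ := B.repr
  have hφcoord : ∀ (x : EuclideanSpace ℝ (Fin d)) (j : Fin d), φ x j = ⟪p j, x⟫ := by
    intro x j
    rw [show φ x j = ⟪B j, x⟫ from B.repr_apply_apply x j, show B j = p j from congrFun hB j]
  -- K is compact, convex
  have hKcomp : IsCompact K := by
    rw [hK]; exact V.finite_toSet.isCompact_convexHull ℝ
  have hKconv : Convex ℝ K := by
    rw [hK]; exact convex_convexHull ℝ _
  -- p j is orthogonal to the span of earlier p's, for j ≥ i
  have hpjS : ∀ i j : Fin d, i ≤ j → p j ∈ (Submodule.span ℝ (p '' {k | k < i}))ᗮ := by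
    intro i j hij
    refine Submodule.orthogonal_le (Submodule.span_mono (Set.image_mono ?_)) (hpmem j)
    intro k hk
    exact lt_of_lt_of_le hk hij
  -- inner products see only the projection
  have hinner : ∀ (i j : Fin d), i ≤ j → ∀ x : EuclideanSpace ℝ (Fin d),
      ⟪p j, x⟫ = ⟪p j, (((Submodule.span ℝ (p '' {k | k < i}))ᗮ).subtype
        ((Submodule.orthogonalProjectionOnto ((Submodule.span ℝ (p '' {k | k < i}))ᗮ)) x))⟫ := by
    intro i j hij x
    have hsub := Submodule.sub_starProjection_mem_orthogonal
      (K := (Submodule.span ℝ (p '' {k | k < i}))ᗮ) x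
    have h0 := (Submodule.mem_orthogonal _ _).mp hsub _ (hpjS i j hij)
    rw [inner_sub_right, Submodule.starProjection_apply] at h0
    rw [Submodule.subtype_apply]
    linarith [h0]
  -- coordinate difference identities
  have hdiff : ∀ i : Fin d, ∃ a ∈ K, ∃ b ∈ K,
      (∀ j : Fin d, i ≤ j → ⟪p j, a⟫ - ⟪p j, b⟫ = if j = i then l i else 0) := by
    intro i
    obtain ⟨a, ha, b, hb, hab⟩ := hreal i
    refine ⟨a, ha, b, hb, fun j hij => ?_⟩
    have h1 : ⟪p j, a⟫ - ⟪p j, b⟫ = ⟪p j, (l i • p i : EuclideanSpace ℝ (Fin d))⟫ := by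
      rw [hinner i j hij a, hinner i j hij b, ← inner_sub_right, hab]
    rw [h1, real_inner_smul_right, orthonormal_iff_ite.mp horth j i]
    by_cases hji : j = i <;> simp [hji]
  -- the bound from the diameter
  have hbound : ∀ i : Fin d, ∀ z ∈ K, ∀ y ∈ K, ⟪p i, z⟫ - ⟪p i, y⟫ ≤ l i := by
    intro i z hz y hy
    set S := (Submodule.span ℝ (p '' {k | k < i}))ᗮ with hSdef
    have hprojb : Bornology.IsBounded ((Submodule.orthogonalProjectionOnto S) '' K) :=
      (hKcomp.image (Submodule.orthogonalProjectionOnto S).continuous).isBounded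
    have h1 : ⟪p i, z⟫ - ⟪p i, y⟫
        = ⟪p i, (S.subtype ((Submodule.orthogonalProjectionOnto S) z)
            - S.subtype ((Submodule.orthogonalProjectionOnto S) y) : EuclideanSpace ℝ (Fin d))⟫ := by
      rw [inner_sub_right, ← hinner i i le_rfl z, ← hinner i i le_rfl y]
    have h2 : ⟪p i, (S.subtype ((Submodule.orthogonalProjectionOnto S) z)
            - S.subtype ((Submodule.orthogonalProjectionOnto S) y) : EuclideanSpace ℝ (Fin d))⟫
        ≤ ‖S.subtype ((Submodule.orthogonalProjectionOnto S) z) - S.subtype ((Submodule.orthogonalProjectionOnto S) y)‖ := by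
      have := real_inner_le_norm (p i) (S.subtype ((Submodule.orthogonalProjectionOnto S) z)
            - S.subtype ((Submodule.orthogonalProjectionOnto S) y))
      rwa [hpnorm i, one_mul] at this
    have h3 : ‖S.subtype ((Submodule.orthogonalProjectionOnto S) z) - S.subtype ((Submodule.orthogonalProjectionOnto S) y)‖
        = dist ((Submodule.orthogonalProjectionOnto S) z) ((Submodule.orthogonalProjectionOnto S) y) := by
      rw [dist_eq_norm, Submodule.coe_norm]
      norm_cast
    have h4 : dist ((Submodule.orthogonalProjectionOnto S) z) ((Submodule.orthogonalProjectionOnto S) y)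
        ≤ Metric.diam ((Submodule.orthogonalProjectionOnto S) '' K) :=
      Metric.dist_le_diam_of_mem hprojb ⟨z, hz, rfl⟩ ⟨y, hy, rfl⟩
    rw [h1]
    calc _ ≤ _ := h2
      _ = _ := h3
      _ ≤ _ := h4
      _ = l i := (hldiam i).symm
  -- the image L of K under the coordinate map
  set L : Set (EuclideanSpace ℝ (Fin d)) := ⇑φ '' K with hLdef
  have hLconv : Convex ℝ L := by
    have h := hKconv.linear_image (φ.toLinearEquiv : EuclideanSpace ℝ (Fin d) →ₗ[ℝ]
      EuclideanSpace ℝ (Fin d))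
    have heq : ⇑(φ.toLinearEquiv : EuclideanSpace ℝ (Fin d) →ₗ[ℝ] EuclideanSpace ℝ (Fin d))
        = ⇑φ := rfl
    rwa [heq] at h
  -- the hypotheses of the core lemma
  have H : ∀ i : Fin d, ∃ a ∈ L, ∃ b ∈ L,
      (∀ j : Fin d, i ≤ j → a j - b j = if j = i then l i else 0) ∧
      (∀ x ∈ L, b i ≤ x i ∧ x i ≤ a i) := by
    intro i
    obtain ⟨a, ha, b, hb, hab⟩ := hdiff i
    have habi : ⟪p i, a⟫ - ⟪p i, b⟫ = l i := by simpa using hab i le_rfl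
    refine ⟨φ a, ⟨a, ha, rfl⟩, φ b, ⟨b, hb, rfl⟩, ?_, ?_⟩
    · intro j hij
      rw [hφcoord a j, hφcoord b j]
      exact hab j hij
    · rintro x ⟨y, hy, rfl⟩
      rw [hφcoord y i, hφcoord a i, hφcoord b i]
      constructor
      · linarith [hbound i a ha y hy]
      · linarith [hbound i y hy b hb]
  obtain ⟨c, hc⟩ := core d hd1 L hLconv l hlpos H
  -- boxW dominates the required widths
  have hwge : ∀ i : Fin d, ((2:ℝ) ^ (2 * (d - 1)))⁻¹ * l i ≤ boxW d l i := by
    intro i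
    have h24 : ((4:ℝ))⁻¹ ^ (d-1) = ((2:ℝ) ^ (2 * (d - 1)))⁻¹ := by
      rw [inv_pow]
      congr 1
      rw [show (4:ℝ) = 2^2 by norm_num, ← pow_mul]
    by_cases h : (i:ℕ) = d - 1
    · rw [boxW, if_pos h, h24, mul_comm]
    · rw [boxW, if_neg h]
      have hid : (i:ℕ) < d - 1 := by have := i.isLt; omega
      have e1 : ((4:ℝ)⁻¹) ^ (i:ℕ) / 2 = ((2:ℝ) ^ (2 * (i:ℕ) + 1))⁻¹ := by
        rw [show (4:ℝ)⁻¹ = (2:ℝ)⁻¹^2 by norm_num, ← pow_mul, pow_add, pow_one, mul_inv,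
          inv_pow]
        ring
      have e2 : ((2:ℝ) ^ (2 * (d-1)))⁻¹ ≤ ((2:ℝ) ^ (2 * (i:ℕ) + 1))⁻¹ := by
        apply inv_anti₀
        · positivity
        · exact pow_le_pow_right₀ (by norm_num) (by omega)
      have h1 : ((2:ℝ) ^ (2 * (d - 1)))⁻¹ ≤ ((4:ℝ)⁻¹) ^ (i:ℕ) / 2 := by
        rw [e1]; exact e2
      have := mul_le_mul_of_nonneg_right h1 (hlpos i).le
      calc ((2:ℝ) ^ (2 * (d - 1)))⁻¹ * l i ≤ ((4:ℝ)⁻¹) ^ (i:ℕ) / 2 * l i := this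
        _ = l i / 2 * (4:ℝ)⁻¹ ^ (i:ℕ) := by ring
  -- assemble the isometry
  let cE : EuclideanSpace ℝ (Fin d) := WithLp.toLp 2 c
  refine ⟨(IsometryEquiv.constVAdd (G := EuclideanSpace ℝ (Fin d)) cE).trans
    φ.symm.toIsometryEquiv, ?_⟩
  rintro y ⟨q, hq, rfl⟩
  have hcq : (cE + q : EuclideanSpace ℝ (Fin d)) ∈ L := by
    apply hc
    intro j
    obtain ⟨h1, h2⟩ := hq j
    have hadd : (cE + q : EuclideanSpace ℝ (Fin d)) j = c j + q j := rfl
    rw [hadd]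
    constructor
    · linarith
    · linarith [hwge j]
  obtain ⟨z, hz, hzeq⟩ := hcq
  have heq : ((IsometryEquiv.constVAdd (G := EuclideanSpace ℝ (Fin d)) cE).trans
      φ.symm.toIsometryEquiv) q = z := by
    have h1 : ((IsometryEquiv.constVAdd (G := EuclideanSpace ℝ (Fin d)) cE).trans
        φ.symm.toIsometryEquiv) q = φ.symm (cE + q) := by
      simp [IsometryEquiv.trans_apply, vadd_eq_add]
    rw [h1, ← hzeq]
    exact φ.symm_apply_apply z
  rw [heq]
  exact hz
end

section
/- Let B_d = ∏_{i=1}^d [−a_i, a_i] × {0} ⊆ ℝ^{d+1} and let p ∈ ℝ^{d+1} be a point whose orthogonal projection onto ℝ^d × {0} lies in B_d and whose (d+1)-st coordinate equals h > 0. Then the convex hull of B_d and p contains a box congruent to ∏_{i=1}^d [0, a_i] × [0, h/2]. -/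
open Set

/-- Let `B_d = ∏_{i=1}^d [-a_i, a_i] × {0} ⊆ ℝ^{d+1}` and let `p` be a
point whose orthogonal projection onto `ℝ^d × {0}` lies in `B_d` and whose last
coordinate equals `h > 0`. Then `conv(B_d ∪ {p})` contains a box congruent to
`∏_{i=1}^d [0, a_i] × [0, h/2]`. -/
theorem stmt_2 (d : ℕ) (a : Fin d → ℝ) (ha : ∀ i, 0 ≤ a i)
    (h : ℝ) (hh : 0 < h)
    (Bd : Set (EuclideanSpace ℝ (Fin (d + 1))))
    (hBd : Bd = {q | (∀ i : Fin d, q i.castSucc ∈ Set.Icc (-(a i)) (a i)) ∧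
      q (Fin.last d) = 0})
    (p : EuclideanSpace ℝ (Fin (d + 1)))
    (hproj : ∀ i : Fin d, p i.castSucc ∈ Set.Icc (-(a i)) (a i))
    (hlast : p (Fin.last d) = h) :
    ∃ f : EuclideanSpace ℝ (Fin (d + 1)) ≃ᵢ EuclideanSpace ℝ (Fin (d + 1)),
      f '' {q | (∀ i : Fin d, q i.castSucc ∈ Set.Icc 0 (a i)) ∧
          q (Fin.last d) ∈ Set.Icc 0 (h / 2)}
        ⊆ convexHull ℝ (Bd ∪ {p}) := by
  classical
  -- translation vector
  set v : EuclideanSpace ℝ (Fin (d + 1)) :=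
    WithLp.toLp 2 (fun i => Fin.lastCases 0 (fun j => (p j.castSucc - a j) / 2) i) with hv
  refine ⟨IsometryEquiv.addRight v, ?_⟩
  rintro x ⟨q, ⟨hq, hqt⟩, rfl⟩
  -- x = q + v
  set t := q (Fin.last d) with ht
  set lam := t / h with hlam
  have hlam0 : 0 ≤ lam := div_nonneg hqt.1 hh.le
  have hlam2 : lam ≤ 1 / 2 := by
    rw [hlam, div_le_div_iff₀ hh (by norm_num)]
    nlinarith [hqt.2]
  have h1lam : (0:ℝ) < 1 - lam := by linarith
  set b : EuclideanSpace ℝ (Fin (d + 1)) :=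
    WithLp.toLp 2 (fun i => Fin.lastCases 0
      (fun j => (q j.castSucc + (p j.castSucc - a j) / 2 - lam * p j.castSucc) / (1 - lam)) i)
    with hb
  have hbmem : b ∈ Bd := by
    rw [hBd]
    constructor
    · intro i
      have hbi : b i.castSucc =
          (q i.castSucc + (p i.castSucc - a i) / 2 - lam * p i.castSucc) / (1 - lam) := by
        simp [hb]
      rw [hbi]
      constructor
      · rw [le_div_iff₀ h1lam]
        nlinarith [(hq i).1, (hq i).2, (hproj i).1, (hproj i).2]
      · rw [div_le_iff₀ h1lam]
        nlinarith [(hq i).1, (hq i).2, (hproj i).1, (hproj i).2]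
    · simp [hb]
  have hbhull : b ∈ convexHull ℝ (Bd ∪ {p}) :=
    subset_convexHull ℝ _ (Or.inl hbmem)
  have hphull : p ∈ convexHull ℝ (Bd ∪ {p}) :=
    subset_convexHull ℝ _ (Or.inr rfl)
  have key : (IsometryEquiv.addRight v) q = (1 - lam) • b + lam • p := by
    have : (IsometryEquiv.addRight v) q = q + v := rfl
    rw [this]
    ext i
    have hadd : (q + v) i = q i + v i := rfl
    have hcomb : ((1 - lam) • b + lam • p) i = (1 - lam) * b i + lam * p i := rfl
    rw [hadd, hcomb]
    refine Fin.lastCases ?_ (fun j => ?_) i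
    · have hb0 : b (Fin.last d) = 0 := by simp [hb]
      have hv0 : v (Fin.last d) = 0 := by simp [hv]
      rw [hb0, hv0, hlast]
      rw [hlam, ht, div_mul_cancel₀ _ hh.ne']
      ring
    · have hbj : b j.castSucc =
          (q j.castSucc + (p j.castSucc - a j) / 2 - lam * p j.castSucc) / (1 - lam) := by
        simp [hb]
      have hvj : v j.castSucc = (p j.castSucc - a j) / 2 := by simp [hv]
      rw [hbj, hvj]
      field_simp
      ring
  rw [key]
  exact (convex_convexHull ℝ _) hbhull hphull (by linarith) hlam0 (by ring)
end
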